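/- Let α > 2, H, P > 0, ω > 0, M > 0. Define s(λ) := (λ²/2)H + (ω/2)M − (λ^α/(σ+2))P and G(λ) := λ²H − (α/(σ+2))λ^α P, so G(λ) = λ s'(λ). Suppose G(1) < 0. Then there exists λ₀ ∈ (0,1) with G(λ₀) = 0, and for any such λ₀, G(1) ≤ 2(s(1) − s(λ₀)). -/

import Mathlib

/-- with s(λ) = (λ²/2)H + (ω/2)M − (λ^α/(σ+2))P and
G(λ) = λ²H − (α/(σ+2))λ^α P (so G(λ) = λs'(λ)), if G(1) < 0 then there is
λ₀ ∈ (0,1) with G(λ₀) = 0, and for any such λ₀, G(1) ≤ 2(s(1) − s(λ₀)). -/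
theorem virial_action_gap (σ α H P ω M : ℝ)
    (hσ : 0 < σ) (hα : 2 < α) (hH : 0 < H) (hP : 0 < P)
    (hω : 0 < ω) (hM : 0 < M)
    (hG1 : (1 : ℝ) ^ 2 * H - α / (σ + 2) * (1 : ℝ) ^ α * P < 0) :
    (∃ lam₀ ∈ Set.Ioo (0 : ℝ) 1,
        lam₀ ^ 2 * H - α / (σ + 2) * lam₀ ^ α * P = 0) ∧
      ∀ lam₀ ∈ Set.Ioo (0 : ℝ) 1,
        lam₀ ^ 2 * H - α / (σ + 2) * lam₀ ^ α * P = 0 →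
          (1 : ℝ) ^ 2 * H - α / (σ + 2) * (1 : ℝ) ^ α * P ≤
            2 * (((1 : ℝ) ^ 2 / 2 * H + ω / 2 * M - (1 : ℝ) ^ α / (σ + 2) * P) -
              (lam₀ ^ 2 / 2 * H + ω / 2 * M - lam₀ ^ α / (σ + 2) * P)) := by
  have hσ2 : (0:ℝ) < σ + 2 := by linarith
  have hc : 0 < α / (σ + 2) * P := by positivity
  rw [Real.one_rpow] at hG1
  have hH' : H < α / (σ + 2) * P := by nlinarith [hG1]
  set c : ℝ := α / (σ + 2) * P with hcdef
  have hrpos : 0 < H / c := div_pos hH hc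
  have hrlt : H / c < 1 := (div_lt_one hc).2 hH'
  have hαs : (0:ℝ) < α - 2 := by linarith
  set lam₀ : ℝ := (H / c) ^ ((α - 2)⁻¹) with hlam
  have hlpos : 0 < lam₀ := Real.rpow_pos_of_pos hrpos _
  have hllt : lam₀ < 1 := Real.rpow_lt_one hrpos.le hrlt (by positivity)
  constructor
  · refine ⟨lam₀, ⟨hlpos, hllt⟩, ?_⟩
    have h2 : (lam₀ : ℝ) ^ (2:ℕ) = (H / c) ^ (2 * (α - 2)⁻¹) := by
      rw [hlam, ← Real.rpow_natCast ((H / c) ^ ((α - 2)⁻¹)) 2,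
        ← Real.rpow_mul hrpos.le]
      try norm_num [mul_comm]
    have hA : lam₀ ^ α = (H / c) ^ (2 * (α - 2)⁻¹) * (H / c) := by
      rw [hlam, ← Real.rpow_mul hrpos.le]
      have h3 : (α - 2)⁻¹ * α = 2 * (α - 2)⁻¹ + 1 := by
        field_simp
        ring
      rw [h3, Real.rpow_add hrpos, Real.rpow_one]
    rw [h2, hA]
    have key : α / (σ + 2) * ((H / c) ^ (2 * (α - 2)⁻¹) * (H / c)) * P
        = (H / c) ^ (2 * (α - 2)⁻¹) * (c * (H / c)) := by rw [hcdef]; ring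
    rw [key, mul_div_cancel₀ H hc.ne']
    ring
  · rintro l ⟨hl0, hl1⟩ hz
    have hx1 : l ^ α ≤ 1 := (Real.rpow_le_one hl0.le hl1.le (by linarith)).trans_eq rfl
    have hx0 : 0 ≤ l ^ α := Real.rpow_nonneg hl0.le α
    have ht : 0 < (σ + 2)⁻¹ := by positivity
    simp only [Real.one_rpow, one_pow, div_eq_mul_inv] at hz ⊢
    nlinarith [hz, mul_nonneg (mul_nonneg (mul_nonneg hαs.le hP.le) ht.le)
      (sub_nonneg.2 hx1)]
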